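/- Let n ≥ 3 and let L be a real symmetric positive semidefinite n×n matrix with L𝟙 = 0 (e.g., the Laplacian matrix of a connected graph), such that λ_{n−1}(L) > 0 and λ_{n−2}(L) > λ_{n−1}(L). Let i ≠ j be indices in {1,…,n} and let a = e_i − e_j, where e_i denotes the i-th standard basis vector of ℝⁿ. Let v ∈ ℝⁿ be a unit vector with Lv = λ_{n−1}(L)·v and vᵀ𝟙 = 0. Then λ_{n−1}(L + aaᵀ) − λ_{n−1}(L) ≥ (aᵀv)² / ( 6/(λ_{n−2}(L) − λ_{n−1}(L)) + 1 ). -/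

import Mathlib

open Matrix

/-- Eigenvalues of a Hermitian matrix sorted in ascending order:
`eigAsc hM 0` is the smallest eigenvalue and `eigAsc hM (n-1)` the largest. -/
noncomputable def eigAsc {n : ℕ} {M : Matrix (Fin n) (Fin n) ℝ} (hM : M.IsHermitian) : Fin n → ℝ :=
  hM.eigenvalues ∘ Tuple.sort hM.eigenvalues

/-- The ℓ² operator (spectral) norm of a real square matrix. -/
noncomputable def specNorm {n : ℕ} (M : Matrix (Fin n) (Fin n) ℝ) : ℝ :=
  ‖Matrix.toEuclideanCLM (𝕜 := ℝ) M‖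

/-- A real square matrix is doubly stochastic if its entries are nonnegative and
all row sums and column sums equal one. -/
def DoublyStochastic {n : ℕ} (M : Matrix (Fin n) (Fin n) ℝ) : Prop :=
  (∀ i j, 0 ≤ M i j) ∧ (∀ i, ∑ j, M i j = 1) ∧ (∀ j, ∑ i, M i j = 1)

/-- The matrix `J = (1/n) 𝟙𝟙ᵀ` with all entries equal to `1/n`. -/
noncomputable def Jmat (n : ℕ) : Matrix (Fin n) (Fin n) ℝ := Matrix.of fun _ _ => (n : ℝ)⁻¹

namespace Prop1Aux

variable {n : ℕ} {A : Matrix (Fin n) (Fin n) ℝ}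

noncomputable def toE (x : Fin n → ℝ) : EuclideanSpace ℝ (Fin n) := WithLp.toLp 2 x

lemma sym_mulVec (hA : A.IsHermitian) (x y : Fin n → ℝ) :
    x ⬝ᵥ (A *ᵥ y) = (A *ᵥ x) ⬝ᵥ y := by
  have h : Aᵀ = A := by
    rw [← Matrix.conjTranspose_eq_transpose_of_trivial]; exact hA
  rw [Matrix.dotProduct_mulVec, ← Matrix.mulVec_transpose, h]

lemma parseval (hA : A.IsHermitian) (x y : Fin n → ℝ) :
    x ⬝ᵥ y = ∑ k, (⇑(hA.eigenvectorBasis k) ⬝ᵥ x) * (⇑(hA.eigenvectorBasis k) ⬝ᵥ y) := by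
  have h := (hA.eigenvectorBasis).sum_inner_mul_inner (toE x) (toE y)
  simp only [PiLp.inner_apply, RCLike.inner_apply, conj_trivial] at h
  unfold toE at h
  simp only [dotProduct, WithLp.ofLp_toLp] at h ⊢
  rw [Finset.sum_congr rfl fun i _ => mul_comm (x i) (y i), ← h]
  refine Finset.sum_congr rfl fun k _ => ?_
  congr 1
  exact Finset.sum_congr rfl fun i _ => mul_comm _ _

lemma quad_expand (hA : A.IsHermitian) (x : Fin n → ℝ) :
    x ⬝ᵥ (A *ᵥ x) = ∑ k, hA.eigenvalues k * (⇑(hA.eigenvectorBasis k) ⬝ᵥ x) ^ 2 := by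
  rw [parseval hA x (A *ᵥ x)]
  refine Finset.sum_congr rfl fun k _ => ?_
  rw [sym_mulVec hA, hA.mulVec_eigenvectorBasis, smul_dotProduct, smul_eq_mul]
  ring

lemma orthB (hA : A.IsHermitian) (k l : Fin n) :
    ⇑(hA.eigenvectorBasis k) ⬝ᵥ ⇑(hA.eigenvectorBasis l) = if k = l then 1 else 0 := by
  have h := orthonormal_iff_ite.mp hA.eigenvectorBasis.orthonormal k l
  simp only [PiLp.inner_apply, RCLike.inner_apply, conj_trivial] at h
  rw [dotProduct]
  convert h using 2
  exact mul_comm _ _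

lemma eig_dot_zero (hA : A.IsHermitian) {z : Fin n → ℝ} {c : ℝ} (hz : A *ᵥ z = c • z)
    {k : Fin n} (hk : hA.eigenvalues k ≠ c) : ⇑(hA.eigenvectorBasis k) ⬝ᵥ z = 0 := by
  have h1 : ⇑(hA.eigenvectorBasis k) ⬝ᵥ (A *ᵥ z) = c * (⇑(hA.eigenvectorBasis k) ⬝ᵥ z) := by
    rw [hz, dotProduct_smul]; simp
  have h2 : ⇑(hA.eigenvectorBasis k) ⬝ᵥ (A *ᵥ z)
      = hA.eigenvalues k * (⇑(hA.eigenvectorBasis k) ⬝ᵥ z) := by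
    rw [sym_mulVec hA, hA.mulVec_eigenvectorBasis, smul_dotProduct]; simp
  have := sub_eq_zero.mpr (h2.symm.trans h1)
  rw [← sub_mul] at this
  rcases mul_eq_zero.mp this with h | h
  · exact absurd (sub_eq_zero.mp h) hk
  · exact h

lemma dot_eq_single (hA : A.IsHermitian) {z : Fin n → ℝ} {c : ℝ} {k₁ : Fin n}
    (hz : A *ᵥ z = c • z) (huniq : ∀ k, hA.eigenvalues k = c → k = k₁) (x : Fin n → ℝ) :
    x ⬝ᵥ z = (⇑(hA.eigenvectorBasis k₁) ⬝ᵥ x) * (⇑(hA.eigenvectorBasis k₁) ⬝ᵥ z) := by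
  rw [parseval hA x z]
  refine Finset.sum_eq_single k₁ (fun k _ hk => ?_) (fun h => absurd (Finset.mem_univ k₁) h)
  rcases eq_or_ne (hA.eigenvalues k) c with he | he
  · exact absurd (huniq k he) hk
  · rw [eig_dot_zero hA hz he, mul_zero]

lemma quad_lower (hA : A.IsHermitian) (k₀ k₁ : Fin n) (x : Fin n → ℝ)
    (h0 : ⇑(hA.eigenvectorBasis k₀) ⬝ᵥ x = 0) (h1 : ⇑(hA.eigenvectorBasis k₁) ⬝ᵥ x = 0)
    (c : ℝ) (hge : ∀ k, k ≠ k₀ → k ≠ k₁ → c ≤ hA.eigenvalues k) :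
    c * (x ⬝ᵥ x) ≤ x ⬝ᵥ (A *ᵥ x) := by
  rw [quad_expand hA, parseval hA x x, Finset.mul_sum]
  refine Finset.sum_le_sum fun k _ => ?_
  rcases eq_or_ne k k₀ with rfl | hk0
  · rw [h0]; simp
  rcases eq_or_ne k k₁ with rfl | hk1
  · rw [h1]; simp
  have := hge k hk0 hk1
  have h2 : (⇑(hA.eigenvectorBasis k) ⬝ᵥ x) * (⇑(hA.eigenvectorBasis k) ⬝ᵥ x)
      = (⇑(hA.eigenvectorBasis k) ⬝ᵥ x) ^ 2 := by ring
  rw [h2]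
  exact mul_le_mul_of_nonneg_right this (sq_nonneg _)

lemma comps_zero (hA : A.IsHermitian) (hnn : ∀ k, 0 ≤ hA.eigenvalues k) {x : Fin n → ℝ}
    (hx : x ⬝ᵥ (A *ᵥ x) = 0) {k : Fin n} (hk : 0 < hA.eigenvalues k) :
    ⇑(hA.eigenvectorBasis k) ⬝ᵥ x = 0 := by
  rw [quad_expand hA] at hx
  have hterm : ∀ l ∈ Finset.univ, (0:ℝ) ≤ hA.eigenvalues l * (⇑(hA.eigenvectorBasis l) ⬝ᵥ x) ^ 2 :=
    fun l _ => mul_nonneg (hnn l) (sq_nonneg _)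
  have h := (Finset.sum_eq_zero_iff_of_nonneg hterm).mp hx k (Finset.mem_univ k)
  rcases mul_eq_zero.mp h with h' | h'
  · exact absurd h' hk.ne'
  · exact (pow_eq_zero_iff two_ne_zero).mp h'

end Prop1Aux

set_option maxHeartbeats 2000000 in
/-- Proposition 1: lower bound on the increase of algebraic connectivity caused by
adding a single edge `a = e_i - e_j` to the Laplacian `L`. -/
theorem stmt0 {n : ℕ} (hn : 3 ≤ n) (L : Matrix (Fin n) (Fin n) ℝ)
    (hL : L.PosSemidef)
    (hL1 : L.mulVec (fun _ => 1) = 0)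
    (i j : Fin n) (hij : i ≠ j)
    (a : Fin n → ℝ) (ha : a = Pi.single i 1 - Pi.single j 1)
    (hL' : (L + Matrix.vecMulVec a a).IsHermitian)
    (hpos : 0 < eigAsc hL.1 ⟨1, by omega⟩)
    (hgap : eigAsc hL.1 ⟨1, by omega⟩ < eigAsc hL.1 ⟨2, by omega⟩)
    (v : Fin n → ℝ) (hv : v ⬝ᵥ v = 1)
    (hev : L.mulVec v = eigAsc hL.1 ⟨1, by omega⟩ • v)
    (hv1 : v ⬝ᵥ (fun _ => 1) = 0) :
    eigAsc hL' ⟨1, by omega⟩ - eigAsc hL.1 ⟨1, by omega⟩ ≥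
      (a ⬝ᵥ v) ^ 2 /
        (6 / (eigAsc hL.1 ⟨2, by omega⟩ - eigAsc hL.1 ⟨1, by omega⟩) + 1) := by
  classical
  have hn0 : 0 < n := by omega
  set i0 : Fin n := ⟨0, by omega⟩ with hi0
  set i1 : Fin n := ⟨1, by omega⟩ with hi1
  set i2 : Fin n := ⟨2, by omega⟩ with hi2
  set lam := eigAsc hL.1 i1 with hlamdef
  set mu := eigAsc hL.1 i2 with hmudef
  set one : Fin n → ℝ := (fun _ => 1) with honedef
  set M := L + Matrix.vecMulVec a a with hMdef
  set θ := eigAsc hL' i1 with hθdef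
  set σ := Tuple.sort hL.1.eigenvalues with hσdef
  set σ' := Tuple.sort hL'.eigenvalues with hσ'def
  have hmono : Monotone (eigAsc hL.1) := Tuple.monotone_sort _
  have hmono' : Monotone (eigAsc hL') := Tuple.monotone_sort _
  have hasc : ∀ m : Fin n, eigAsc hL.1 m = hL.1.eigenvalues (σ m) := fun _ => rfl
  have hasc' : ∀ m : Fin n, eigAsc hL' m = hL'.eigenvalues (σ' m) := fun _ => rfl
  have hascsymm : ∀ k, hL.1.eigenvalues k = eigAsc hL.1 (σ.symm k) := by
    intro k; rw [hasc, Equiv.apply_symm_apply]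
  have hascsymm' : ∀ k, hL'.eigenvalues k = eigAsc hL' (σ'.symm k) := by
    intro k; rw [hasc', Equiv.apply_symm_apply]
  -- basic facts about the vector a and quadratic forms
  have hadot : ∀ x : Fin n → ℝ, a ⬝ᵥ x = x i - x j := by
    intro x
    rw [ha, sub_dotProduct, single_dotProduct, single_dotProduct,
      one_mul, one_mul]
  have haone : a ⬝ᵥ one = 0 := by rw [hadot]; simp [honedef]
  have haa : a ⬝ᵥ a = 2 := by
    rw [hadot, ha]
    simp [Pi.single_eq_same, Pi.single_eq_of_ne hij, Pi.single_eq_of_ne hij.symm]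
    norm_num
  have hvecmul : ∀ x : Fin n → ℝ, Matrix.vecMulVec a a *ᵥ x = (a ⬝ᵥ x) • a := by
    intro x
    funext k
    simp only [Matrix.mulVec, Matrix.vecMulVec_apply, dotProduct, Pi.smul_apply, smul_eq_mul]
    rw [Finset.sum_mul]
    exact Finset.sum_congr rfl fun l _ => by ring
  have hMquad : ∀ x : Fin n → ℝ, x ⬝ᵥ (M *ᵥ x) = x ⬝ᵥ (L *ᵥ x) + (a ⬝ᵥ x) ^ 2 := by
    intro x
    rw [hMdef, Matrix.add_mulVec, dotProduct_add, hvecmul, dotProduct_smul,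
      smul_eq_mul, dotProduct_comm x a]
    ring
  have hquadL : ∀ x : Fin n → ℝ, 0 ≤ x ⬝ᵥ (L *ᵥ x) := by
    intro x; simpa using hL.dotProduct_mulVec_nonneg x
  have hMpsd : M.PosSemidef := by
    refine .of_dotProduct_mulVec_nonneg (by rw [hMdef]; exact hL') fun x => ?_
    simp only [star_trivial]
    rw [hMquad x]
    exact add_nonneg (hquadL x) (sq_nonneg _)
  have hM1 : M *ᵥ one = 0 := by
    rw [hMdef, Matrix.add_mulVec, hvecmul, haone, hL1]
    simp
  -- eigenvalue bookkeeping for L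
  have hνnn : ∀ k, 0 ≤ hL.1.eigenvalues k := fun k => hL.eigenvalues_nonneg k
  have honene : one ≠ 0 := by
    intro h
    have := congrFun h ⟨0, hn0⟩
    simp [honedef] at this
  have hdet : L.det = 0 := (Matrix.exists_mulVec_eq_zero_iff).mp ⟨one, honene, hL1⟩
  have hex0 : ∃ k, hL.1.eigenvalues k = 0 := by
    have h := hL.1.det_eq_prod_eigenvalues
    rw [hdet] at h
    obtain ⟨k, _, hk⟩ := Finset.prod_eq_zero_iff.mp h.symm
    exact ⟨k, by exact_mod_cast hk⟩
  have hasc0 : eigAsc hL.1 i0 = 0 := by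
    obtain ⟨k, hk⟩ := hex0
    refine le_antisymm ?_ ?_
    · calc eigAsc hL.1 i0 ≤ eigAsc hL.1 (σ.symm k) := hmono (by simp [Fin.le_def, hi0])
        _ = 0 := by rw [← hascsymm, hk]
    · rw [hasc]; exact hνnn _
  have hgeLam : ∀ k, k ≠ σ i0 → lam ≤ hL.1.eigenvalues k := by
    intro k hk
    have h1 : σ.symm k ≠ i0 := fun h => hk (by rw [← h, Equiv.apply_symm_apply])
    have h2 : i1 ≤ σ.symm k := by
      rw [Fin.le_def]
      have h0 : (σ.symm k).val ≠ 0 := fun h0 => h1 (Fin.ext (by simp [hi0, h0]))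
      simp only [hi1]
      omega
    rw [hascsymm]
    exact hmono h2
  have hgeMu : ∀ k, k ≠ σ i0 → k ≠ σ i1 → mu ≤ hL.1.eigenvalues k := by
    intro k hk0 hk1
    have h1 : σ.symm k ≠ i0 := fun h => hk0 (by rw [← h, Equiv.apply_symm_apply])
    have h1' : σ.symm k ≠ i1 := fun h => hk1 (by rw [← h, Equiv.apply_symm_apply])
    have h2 : i2 ≤ σ.symm k := by
      rw [Fin.le_def]
      have e0 : (σ.symm k).val ≠ 0 := fun h0 => h1 (Fin.ext (by simp [hi0, h0]))
      have e1 : (σ.symm k).val ≠ 1 := fun h0 => h1' (Fin.ext (by simp [hi1, h0]))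
      simp only [hi2]
      omega
    rw [hascsymm]
    exact hmono h2
  have huniq0 : ∀ k, hL.1.eigenvalues k = 0 → k = σ i0 := by
    intro k hk
    by_contra hne
    have h := hgeLam k hne
    rw [hk] at h
    exact absurd hpos h.not_gt
  have huniq1 : ∀ k, hL.1.eigenvalues k = lam → k = σ i1 := by
    intro k hk
    by_contra hne
    rcases eq_or_ne k (σ i0) with rfl | hne0
    · rw [← hasc, hasc0] at hk
      exact absurd hpos (by rw [← hk]; exact lt_irrefl 0)
    · have h := hgeMu k hne0 hne
      rw [hk] at h
      exact absurd hgap h.not_gt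
  -- component-vanishing lemmas for L's eigenbasis
  have hBone : ∀ x : Fin n → ℝ, x ⬝ᵥ one = 0 →
      ⇑(hL.1.eigenvectorBasis (σ i0)) ⬝ᵥ x = 0 := by
    have hz : L *ᵥ one = (0:ℝ) • one := by rw [hL1]; simp
    have hone2 : one ⬝ᵥ one = (n : ℝ) := by simp [honedef, dotProduct]
    have hrep := fun x => Prop1Aux.dot_eq_single hL.1 hz huniq0 x
    have hbne : ⇑(hL.1.eigenvectorBasis (σ i0)) ⬝ᵥ one ≠ 0 := by
      intro h0
      have h := hrep one
      rw [h0, mul_zero, hone2] at h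
      have hnne : (n:ℝ) ≠ 0 := by positivity
      exact hnne h
    intro x hx
    have h := hrep x
    rw [hx] at h
    rcases mul_eq_zero.mp h.symm with h' | h'
    · exact h'
    · exact absurd h' hbne
  have hBv : ∀ x : Fin n → ℝ, x ⬝ᵥ v = 0 →
      ⇑(hL.1.eigenvectorBasis (σ i1)) ⬝ᵥ x = 0 := by
    have hz : L *ᵥ v = lam • v := hev
    have hrep := fun x => Prop1Aux.dot_eq_single hL.1 hz huniq1 x
    have hbne : ⇑(hL.1.eigenvectorBasis (σ i1)) ⬝ᵥ v ≠ 0 := by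
      intro h0
      have h := hrep v
      rw [h0, mul_zero, hv] at h
      exact one_ne_zero h
    intro x hx
    have h := hrep x
    rw [hx] at h
    rcases mul_eq_zero.mp h.symm with h' | h'
    · exact h'
    · exact absurd h' hbne
  -- positivity of θ
  have hν'nn : ∀ k, 0 ≤ hL'.eigenvalues k := fun k => hMpsd.eigenvalues_nonneg k
  have hθnn : 0 ≤ θ := by rw [hθdef, hasc']; exact hν'nn _
  have hθpos : 0 < θ := by
    rcases lt_or_eq_of_le hθnn with h | h
    · exact h
    exfalso
    have hasc'0 : hL'.eigenvalues (σ' i0) = 0 := by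
      rw [← hasc']
      refine le_antisymm ?_ ?_
      · calc eigAsc hL' i0 ≤ θ := hmono' (by simp [Fin.le_def, hi0, hi1])
          _ = 0 := h.symm
      · rw [hasc']; exact hν'nn _
    have hasc'1 : hL'.eigenvalues (σ' i1) = 0 := by rw [← hasc', ← hθdef, ← h]
    set u₀ := ⇑(hL'.eigenvectorBasis (σ' i0)) with hu₀
    set u₁ := ⇑(hL'.eigenvectorBasis (σ' i1)) with hu₁
    have hMu₀ : M *ᵥ u₀ = 0 := by
      have hh := hL'.mulVec_eigenvectorBasis (σ' i0)
      rw [hasc'0, zero_smul] at hh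
      rw [hMdef, hu₀]; exact hh
    have hMu₁ : M *ᵥ u₁ = 0 := by
      have hh := hL'.mulVec_eigenvectorBasis (σ' i1)
      rw [hasc'1, zero_smul] at hh
      rw [hMdef, hu₁]; exact hh
    have hq : ∀ z : Fin n → ℝ, M *ᵥ z = 0 → z ⬝ᵥ (L *ᵥ z) = 0 := by
      intro z hz
      have h1 : z ⬝ᵥ (M *ᵥ z) = 0 := by rw [hz]; simp
      have h2 := hMquad z
      linarith [hquadL z, sq_nonneg (a ⬝ᵥ z)]
    have hcomp : ∀ z : Fin n → ℝ, M *ᵥ z = 0 → ∀ k, k ≠ σ i0 →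
        ⇑(hL.1.eigenvectorBasis k) ⬝ᵥ z = 0 := by
      intro z hz k hk
      exact Prop1Aux.comps_zero hL.1 hνnn (hq z hz) (lt_of_lt_of_le hpos (hgeLam k hk))
    have hrep : ∀ z : Fin n → ℝ, M *ᵥ z = 0 → ∀ x : Fin n → ℝ,
        x ⬝ᵥ z = (⇑(hL.1.eigenvectorBasis (σ i0)) ⬝ᵥ x) *
          (⇑(hL.1.eigenvectorBasis (σ i0)) ⬝ᵥ z) := by
      intro z hz x
      rw [Prop1Aux.parseval hL.1 x z]
      exact Finset.sum_eq_single _ (fun k _ hk => by rw [hcomp z hz k hk, mul_zero])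
        (fun hnot => absurd (Finset.mem_univ _) hnot)
    have e00 : u₀ ⬝ᵥ u₀ = 1 := by rw [hu₀, Prop1Aux.orthB hL']; simp
    have e11 : u₁ ⬝ᵥ u₁ = 1 := by rw [hu₁, Prop1Aux.orthB hL']; simp
    have hi01 : i0 ≠ i1 := by rw [hi0, hi1]; simp [Fin.ext_iff]
    have hσne : σ' i0 ≠ σ' i1 := fun hh => hi01 (σ'.injective hh)
    have e01 : u₀ ⬝ᵥ u₁ = 0 := by rw [hu₀, hu₁, Prop1Aux.orthB hL', if_neg hσne]
    have r00 := hrep u₀ hMu₀ u₀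
    have r11 := hrep u₁ hMu₁ u₁
    have r01 := hrep u₁ hMu₁ u₀
    rw [e00] at r00
    rw [e11] at r11
    rw [e01] at r01
    set P0 := ⇑(hL.1.eigenvectorBasis (σ i0)) ⬝ᵥ u₀ with hP0
    set P1 := ⇑(hL.1.eigenvectorBasis (σ i0)) ⬝ᵥ u₁ with hP1
    have hcontra : (1:ℝ) = 0 := by
      calc (1:ℝ) = (P0 * P0) * (P1 * P1) := by rw [← r00, ← r11]; ring
        _ = (P0 * P1) * (P0 * P1) := by ring
        _ = 0 := by rw [← r01]; ring
    exact one_ne_zero hcontra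
  -- the test eigenvector u of M
  set u := ⇑(hL'.eigenvectorBasis (σ' i1)) with hudef
  have hMu : M *ᵥ u = θ • u := by
    have hh := hL'.mulVec_eigenvectorBasis (σ' i1)
    rw [hMdef, hudef, hθdef, hasc']
    exact hh
  have huu : u ⬝ᵥ u = 1 := by rw [hudef, Prop1Aux.orthB hL']; simp
  have hu1 : u ⬝ᵥ one = 0 := by
    have h1 : (M *ᵥ u) ⬝ᵥ one = θ * (u ⬝ᵥ one) := by
      rw [hMu, smul_dotProduct, smul_eq_mul]
    have h2 : (M *ᵥ u) ⬝ᵥ one = 0 := by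
      have hs := Prop1Aux.sym_mulVec hL' u one
      rw [hMdef] at hM1 ⊢
      rw [← hs, hM1]
      simp
    rw [h2] at h1
    exact (mul_eq_zero.mp h1.symm).resolve_left hθpos.ne'
  -- main quantities
  set c := u ⬝ᵥ v with hcdef
  set s := a ⬝ᵥ u with hsdef
  set t := a ⬝ᵥ v with htdef
  set g := mu - lam with hgdef
  have hg : 0 < g := by rw [hgdef]; linarith [hgap]
  have hvu : v ⬝ᵥ u = c := by rw [dotProduct_comm]
  set w := u - c • v with hwdef
  have hwv : w ⬝ᵥ v = 0 := by
    rw [hwdef, sub_dotProduct, smul_dotProduct, smul_eq_mul, hv, ← hcdef]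
    ring
  have hw1 : w ⬝ᵥ one = 0 := by
    rw [hwdef, sub_dotProduct, smul_dotProduct, smul_eq_mul, hu1, hv1]
    ring
  have hww : w ⬝ᵥ w = 1 - c ^ 2 := by
    rw [hwdef]
    simp only [sub_dotProduct, dotProduct_sub, smul_dotProduct,
      dotProduct_smul, smul_eq_mul, huu, hv, hvu, ← hcdef]
    ring
  have hwLw : mu * (w ⬝ᵥ w) ≤ w ⬝ᵥ (L *ᵥ w) :=
    Prop1Aux.quad_lower hL.1 (σ i0) (σ i1) w (hBone w hw1) (hBv w hwv) mu hgeMu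
  have hvLv : v ⬝ᵥ (L *ᵥ v) = lam := by
    rw [hev, dotProduct_smul, smul_eq_mul, hv, mul_one]
  have hvLw : v ⬝ᵥ (L *ᵥ w) = 0 := by
    rw [Prop1Aux.sym_mulVec hL.1 v w, hev, smul_dotProduct, smul_eq_mul,
      dotProduct_comm v w, hwv, mul_zero]
  have hwLv : w ⬝ᵥ (L *ᵥ v) = 0 := by
    rw [hev, dotProduct_smul, smul_eq_mul, hwv, mul_zero]
  have hu' : u = c • v + w := by rw [hwdef]; simp
  have hLu : u ⬝ᵥ (L *ᵥ u) = c ^ 2 * lam + w ⬝ᵥ (L *ᵥ w) := by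
    calc u ⬝ᵥ (L *ᵥ u) = (c • v + w) ⬝ᵥ (L *ᵥ (c • v + w)) := by rw [← hu']
      _ = c ^ 2 * (v ⬝ᵥ (L *ᵥ v)) + c * (v ⬝ᵥ (L *ᵥ w)) + c * (w ⬝ᵥ (L *ᵥ v))
          + w ⬝ᵥ (L *ᵥ w) := by
        simp only [Matrix.mulVec_add, Matrix.mulVec_smul, add_dotProduct,
          dotProduct_add, smul_dotProduct, dotProduct_smul, smul_eq_mul]
        ring
      _ = c ^ 2 * lam + w ⬝ᵥ (L *ᵥ w) := by rw [hvLv, hvLw, hwLv]; ring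
  have hθeq : θ = u ⬝ᵥ (L *ᵥ u) + s ^ 2 := by
    have h1 : u ⬝ᵥ (M *ᵥ u) = θ := by
      rw [hMu, dotProduct_smul, smul_eq_mul, huu, mul_one]
    rw [← h1, hMquad u]
  have hwwnn : 0 ≤ w ⬝ᵥ w := by
    have hh : w ⬝ᵥ w = ∑ k, w k * w k := rfl
    rw [hh]
    exact Finset.sum_nonneg fun k _ => mul_self_nonneg _
  have hc2 : c ^ 2 ≤ 1 := by rw [hww] at hwwnn; linarith
  have hdelta : g * (1 - c ^ 2) + s ^ 2 ≤ θ - lam := by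
    rw [hww] at hwLw
    rw [hgdef]
    have hexp : mu * (1 - c ^ 2) = mu - mu * c ^ 2 := by ring
    nlinarith [hθeq, hLu, hwLw]
  -- Cauchy–Schwarz
  set w' := v - c • u with hw'def
  have huv : u ⬝ᵥ v = c := rfl
  have hw'w' : w' ⬝ᵥ w' = 1 - c ^ 2 := by
    rw [hw'def]
    simp only [sub_dotProduct, dotProduct_sub, smul_dotProduct,
      dotProduct_smul, smul_eq_mul, huu, hv, hvu, huv]
    ring
  set r := a ⬝ᵥ w' with hrdef
  have htcs : t = c * s + r := by
    have hv' : v = c • u + w' := by rw [hw'def]; simp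
    rw [htdef, hsdef, hrdef]
    calc a ⬝ᵥ v = a ⬝ᵥ (c • u + w') := by rw [← hv']
      _ = c * (a ⬝ᵥ u) + a ⬝ᵥ w' := by
        rw [dotProduct_add, dotProduct_smul, smul_eq_mul]
  have hrsq : r ^ 2 ≤ 2 * (1 - c ^ 2) := by
    have hcs := Finset.sum_mul_sq_le_sq_mul_sq Finset.univ a w'
    have h1 : ∑ k, a k * w' k = r := rfl
    have h2 : ∑ k, (a k) ^ 2 = 2 := by
      rw [← haa]
      exact Finset.sum_congr rfl fun k _ => (sq (a k)).symm ▸ rfl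
    have h3 : ∑ k, (w' k) ^ 2 = 1 - c ^ 2 := by
      rw [← hw'w']
      exact Finset.sum_congr rfl fun k _ => (sq (w' k)).symm ▸ rfl
    rw [h1, h2, h3] at hcs
    exact hcs
  -- final arithmetic
  have hkey : g * t ^ 2 ≤ (g + 2) * (θ - lam) := by
    have h1 : g * (c * s + r) ^ 2 ≤ (g * c ^ 2 + 2) * (s ^ 2 + g * (1 - c ^ 2)) := by
      have hA := sq_nonneg (g * c * r - 2 * s)
      have hB : (0:ℝ) ≤ (g ^ 2 * c ^ 2 + 2 * g) * (2 * (1 - c ^ 2) - r ^ 2) :=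
        mul_nonneg (by positivity) (by linarith [hrsq])
      have hid : 2 * ((g * c ^ 2 + 2) * (s ^ 2 + g * (1 - c ^ 2)) - g * (c * s + r) ^ 2)
          = (g * c * r - 2 * s) ^ 2 + (g ^ 2 * c ^ 2 + 2 * g) * (2 * (1 - c ^ 2) - r ^ 2) := by
        ring
      linarith [hA, hB, hid]
    have h2 : g * c ^ 2 + 2 ≤ g + 2 := by
      have := mul_le_of_le_one_right hg.le hc2
      linarith
    have h3 : (0:ℝ) ≤ s ^ 2 + g * (1 - c ^ 2) :=
      add_nonneg (sq_nonneg s) (mul_nonneg hg.le (by linarith))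
    calc g * t ^ 2 = g * (c * s + r) ^ 2 := by rw [htcs]
      _ ≤ (g * c ^ 2 + 2) * (s ^ 2 + g * (1 - c ^ 2)) := h1
      _ ≤ (g + 2) * (s ^ 2 + g * (1 - c ^ 2)) := mul_le_mul_of_nonneg_right h2 h3
      _ ≤ (g + 2) * (θ - lam) := mul_le_mul_of_nonneg_left (by linarith [hdelta]) (by linarith)
  have hδ0 : 0 ≤ θ - lam := by
    have := mul_nonneg hg.le (show (0:ℝ) ≤ 1 - c ^ 2 by linarith)
    linarith [hdelta, sq_nonneg s]
  have hD : 0 < 6 / g + 1 := by positivity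
  rw [ge_iff_le, div_le_iff₀ hD]
  have hgoal : t ^ 2 * g ≤ ((θ - lam) * (6 / g + 1)) * g := by
    have h6 : (6 / g + 1) * g = 6 + g := by field_simp
    rw [mul_assoc, h6]
    have hexp1 : (θ - lam) * (6 + g) = 6 * (θ - lam) + g * (θ - lam) := by ring
    have hexp2 : (g + 2) * (θ - lam) = g * (θ - lam) + 2 * (θ - lam) := by ring
    linarith [hkey, hδ0]
  exact le_of_mul_le_mul_right hgoal hg
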